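/- Let n, m be positive integers and β > 0, let Γ, Σ ∈ ℝ^{(n+m)×(n+m)} be constant matrices and F : ℝⁿ → ℝⁿ continuous, and let L be the GLE generator. Let K : ℝⁿ×ℝⁿ×ℝᵐ → [1,∞) be twice continuously differentiable and suppose there exist constants c > 0, c′ ∈ ℝ, c″ ≥ 0 such that for all x = (q,p,s): (L K)(x) ≤ −c‖x‖² + c′ and ‖∇_z K(x)‖ ≤ c″(1 + ‖x‖), where ∇_z denotes the gradient in the variables z = (p,s). Then for every sufficiently small θ > 0 there exists b ∈ ℝ such that the function K̂_θ = exp((θ/2)·K) satisfies (L K̂_θ)(x) ≤ −K̂_θ(x) + b for all x ∈ ℝⁿ×ℝⁿ×ℝᵐ. -/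

import Mathlib

open Matrix

/-- The coordinate direction in the `q`-variable. -/
noncomputable def eQ (n m : ℕ) (i : Fin n) : (Fin n → ℝ) × (Fin n → ℝ) × (Fin m → ℝ) :=
  (Pi.single i 1, 0, 0)

/-- The coordinate direction in the `p`-variable. -/
noncomputable def eP (n m : ℕ) (i : Fin n) : (Fin n → ℝ) × (Fin n → ℝ) × (Fin m → ℝ) :=
  (0, Pi.single i 1, 0)

/-- The coordinate direction in the `s`-variable. -/
noncomputable def eS (n m : ℕ) (j : Fin m) : (Fin n → ℝ) × (Fin n → ℝ) × (Fin m → ℝ) :=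
  (0, 0, Pi.single j 1)

/-- The coordinate direction in the `z = (p,s)`-variable. -/
noncomputable def eZ (n m : ℕ) : Fin (n + m) → (Fin n → ℝ) × (Fin n → ℝ) × (Fin m → ℝ) :=
  Fin.addCases (eP n m) (eS n m)

/-- The generator of the quasi-Markovian generalized Langevin equation:
`(Lφ)(q,p,s) = ⟨F(q), ∇_p φ⟩ + ⟨p, ∇_q φ⟩ − ⟨Γ(q)z, ∇_z φ⟩
  + (1/(2β)) ∑_{i,j} (Σ(q)Σ(q)ᵀ)_{ij} ∂²φ/∂z_i∂z_j`, where `z = (p,s)`. -/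
noncomputable def gleGen {n m : ℕ} (β : ℝ)
    (F : (Fin n → ℝ) → (Fin n → ℝ))
    (Γ Sig : (Fin n → ℝ) → Matrix (Fin (n + m)) (Fin (n + m)) ℝ)
    (φ : (Fin n → ℝ) × (Fin n → ℝ) × (Fin m → ℝ) → ℝ)
    (x : (Fin n → ℝ) × (Fin n → ℝ) × (Fin m → ℝ)) : ℝ :=
  let z : Fin (n + m) → ℝ := Fin.addCases x.2.1 x.2.2
  (∑ i, F x.1 i * fderiv ℝ φ x (eP n m i))
    + (∑ i, x.2.1 i * fderiv ℝ φ x (eQ n m i))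
    - (∑ i, (Γ x.1).mulVec z i * fderiv ℝ φ x (eZ n m i))
    + (1 / (2 * β)) * ∑ i, ∑ j,
        (Sig x.1 * (Sig x.1)ᵀ) i j * fderiv ℝ (fun y => fderiv ℝ φ y (eZ n m j)) x (eZ n m i)


section helpers
variable {E : Type*} [NormedAddCommGroup E] [NormedSpace ℝ E]

lemma fderiv_exp_mul (K : E → ℝ) (hK : Differentiable ℝ K) (θ : ℝ) (x v : E) :
    fderiv ℝ (fun y => Real.exp (θ * K y)) x v
      = Real.exp (θ * K x) * (θ * fderiv ℝ K x v) := by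
  have h1 : HasFDerivAt (fun y => θ * K y) (θ • fderiv ℝ K x) x :=
    ((hK x).hasFDerivAt).const_mul θ
  have h2 := (Real.hasDerivAt_exp (θ * K x)).comp_hasFDerivAt x h1
  have h3 : HasFDerivAt (fun y => Real.exp (θ * K y))
      (Real.exp (θ * K x) • (θ • fderiv ℝ K x)) x := h2
  rw [h3.fderiv]
  simp [smul_smul, mul_assoc]

lemma fderiv2_exp_mul (K : E → ℝ) (hK : ContDiff ℝ 2 K) (θ : ℝ) (x v w : E) :
    fderiv ℝ (fun y => fderiv ℝ (fun z => Real.exp (θ * K z)) y w) x v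
      = Real.exp (θ * K x) * ((θ * fderiv ℝ K x v) * (θ * fderiv ℝ K x w)
          + θ * fderiv ℝ (fun y => fderiv ℝ K y w) x v) := by
  have hKd : Differentiable ℝ K := hK.differentiable (by norm_num)
  have hDKw : Differentiable ℝ (fun y => fderiv ℝ K y w) :=
    ((hK.fderiv_right (by norm_num : (1:WithTop ℕ∞) + 1 ≤ 2)).clm_apply
      contDiff_const).differentiable (by norm_num)
  have hrw : (fun y => fderiv ℝ (fun z => Real.exp (θ * K z)) y w)
      = fun y => Real.exp (θ * K y) * (θ * fderiv ℝ K y w) :=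
    funext fun y => fderiv_exp_mul K hKd θ y w
  rw [hrw]
  have hed : DifferentiableAt ℝ (fun y => Real.exp (θ * K y)) x :=
    (Real.differentiable_exp.comp (hKd.const_mul θ)) x
  have hhd : DifferentiableAt ℝ (fun y => θ * fderiv ℝ K y w) x :=
    (hDKw x).const_mul θ
  rw [fderiv_fun_mul hed hhd]
  simp only [ContinuousLinearMap.add_apply, ContinuousLinearMap.smul_apply, smul_eq_mul]
  rw [fderiv_const_mul (hDKw x) θ, fderiv_exp_mul K hKd θ x v]
  simp only [ContinuousLinearMap.smul_apply, smul_eq_mul]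
  ring

end helpers

/-- The chain-rule expansion of the generator applied to `exp (θ * K)`. -/
lemma gleGen_exp {n m : ℕ} (β : ℝ)
    (F : (Fin n → ℝ) → (Fin n → ℝ))
    (Γ Sig : Matrix (Fin (n + m)) (Fin (n + m)) ℝ)
    (K : (Fin n → ℝ) × (Fin n → ℝ) × (Fin m → ℝ) → ℝ) (hK : ContDiff ℝ 2 K)
    (θ : ℝ) (x : (Fin n → ℝ) × (Fin n → ℝ) × (Fin m → ℝ)) :
    gleGen β F (fun _ => Γ) (fun _ => Sig) (fun y => Real.exp (θ * K y)) x
      = Real.exp (θ * K x) * (θ * gleGen β F (fun _ => Γ) (fun _ => Sig) K x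
          + (1 / (2 * β)) * (θ ^ 2 * ∑ i, ∑ j, (Sig * Sigᵀ) i j
              * (fderiv ℝ K x (eZ n m i) * fderiv ℝ K x (eZ n m j)))) := by
  have hKd : Differentiable ℝ K := hK.differentiable (by norm_num)
  have e1 : ∑ i, F x.1 i * fderiv ℝ (fun y => Real.exp (θ * K y)) x (eP n m i)
      = Real.exp (θ * K x) * (θ * ∑ i, F x.1 i * fderiv ℝ K x (eP n m i)) := by
    rw [Finset.mul_sum, Finset.mul_sum]
    exact Finset.sum_congr rfl fun i _ => by rw [fderiv_exp_mul K hKd]; ring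
  have e2 : ∑ i, x.2.1 i * fderiv ℝ (fun y => Real.exp (θ * K y)) x (eQ n m i)
      = Real.exp (θ * K x) * (θ * ∑ i, x.2.1 i * fderiv ℝ K x (eQ n m i)) := by
    rw [Finset.mul_sum, Finset.mul_sum]
    exact Finset.sum_congr rfl fun i _ => by rw [fderiv_exp_mul K hKd]; ring
  have e3 : ∑ i, Γ.mulVec (Fin.addCases x.2.1 x.2.2) i
        * fderiv ℝ (fun y => Real.exp (θ * K y)) x (eZ n m i)
      = Real.exp (θ * K x) * (θ * ∑ i, Γ.mulVec (Fin.addCases x.2.1 x.2.2) i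
          * fderiv ℝ K x (eZ n m i)) := by
    rw [Finset.mul_sum, Finset.mul_sum]
    exact Finset.sum_congr rfl fun i _ => by rw [fderiv_exp_mul K hKd]; ring
  have e4 : ∑ i, ∑ j, (Sig * Sigᵀ) i j
        * fderiv ℝ (fun y => fderiv ℝ (fun z => Real.exp (θ * K z)) y (eZ n m j)) x (eZ n m i)
      = Real.exp (θ * K x) * (θ ^ 2 * ∑ i, ∑ j, (Sig * Sigᵀ) i j
            * (fderiv ℝ K x (eZ n m i) * fderiv ℝ K x (eZ n m j)))
        + Real.exp (θ * K x) * (θ * ∑ i, ∑ j, (Sig * Sigᵀ) i j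
            * fderiv ℝ (fun y => fderiv ℝ K y (eZ n m j)) x (eZ n m i)) := by
    have : ∀ i j : Fin (n + m), (Sig * Sigᵀ) i j
          * fderiv ℝ (fun y => fderiv ℝ (fun z => Real.exp (θ * K z)) y (eZ n m j)) x (eZ n m i)
        = Real.exp (θ * K x) * (θ ^ 2 * ((Sig * Sigᵀ) i j
              * (fderiv ℝ K x (eZ n m i) * fderiv ℝ K x (eZ n m j))))
          + Real.exp (θ * K x) * (θ * ((Sig * Sigᵀ) i j
              * fderiv ℝ (fun y => fderiv ℝ K y (eZ n m j)) x (eZ n m i))) := by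
      intro i j
      rw [fderiv2_exp_mul K hK]
      ring
    simp only [this, Finset.sum_add_distrib, ← Finset.mul_sum]
  simp only [gleGen]
  rw [e1, e2, e3, e4]
  ring

lemma cs_quad {N : ℕ} (A : Matrix (Fin N) (Fin N) ℝ) (g : Fin N → ℝ) :
    ∑ i, ∑ j, (A * Aᵀ) i j * (g i * g j)
      ≤ (∑ k, ∑ i, (A i k) ^ 2) * ∑ i, (g i) ^ 2 := by
  have h1 : ∀ i j, (A * Aᵀ) i j * (g i * g j)
      = ∑ k, (A i k * g i) * (A j k * g j) := by
    intro i j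
    rw [Matrix.mul_apply, Finset.sum_mul]
    exact Finset.sum_congr rfl fun k _ => by
      simp only [Matrix.transpose_apply]; ring
  calc ∑ i, ∑ j, (A * Aᵀ) i j * (g i * g j)
      = ∑ i, ∑ j, ∑ k, (A i k * g i) * (A j k * g j) := by simp only [h1]
    _ = ∑ i, ∑ k, ∑ j, (A i k * g i) * (A j k * g j) :=
        Finset.sum_congr rfl fun i _ => Finset.sum_comm
    _ = ∑ k, ∑ i, ∑ j, (A i k * g i) * (A j k * g j) := Finset.sum_comm
    _ = ∑ k, (∑ i, A i k * g i) ^ 2 := by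
        refine Finset.sum_congr rfl fun k _ => ?_
        rw [sq, Finset.sum_mul]
        exact Finset.sum_congr rfl fun i _ => by rw [Finset.mul_sum]
    _ ≤ ∑ k, (∑ i, (A i k) ^ 2) * ∑ i, (g i) ^ 2 := by
        refine Finset.sum_le_sum fun k _ => ?_
        exact Finset.sum_mul_sq_le_sq_mul_sq _ _ _
    _ = (∑ k, ∑ i, (A i k) ^ 2) * ∑ i, (g i) ^ 2 := by rw [Finset.sum_mul]

set_option maxHeartbeats 1000000 in
/-- If a `C²` Lyapunov function `K ≥ 1` for the constant-coefficient GLE generator satisfies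
`L K ≤ −c‖x‖² + c′` and `‖∇_z K‖ ≤ c″(1 + ‖x‖)`, then for every sufficiently small `θ > 0`
there is `b` such that `K̂_θ = exp((θ/2)K)` satisfies `L K̂_θ ≤ −K̂_θ + b`. -/
theorem stmt7 {n m : ℕ} (hn : 0 < n) (hm : 0 < m) (β : ℝ) (hβ : 0 < β)
    (Γ Sig : Matrix (Fin (n + m)) (Fin (n + m)) ℝ)
    (F : (Fin n → ℝ) → (Fin n → ℝ)) (hFcont : Continuous F)
    (K : (Fin n → ℝ) × (Fin n → ℝ) × (Fin m → ℝ) → ℝ) (hK : ContDiff ℝ 2 K)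
    (hK1 : ∀ x, 1 ≤ K x)
    (c : ℝ) (hc : 0 < c) (c' : ℝ) (c'' : ℝ) (hc'' : 0 ≤ c'')
    (hLK : ∀ x : (Fin n → ℝ) × (Fin n → ℝ) × (Fin m → ℝ),
      gleGen β F (fun _ => Γ) (fun _ => Sig) K x
        ≤ -c * (x.1 ⬝ᵥ x.1 + x.2.1 ⬝ᵥ x.2.1 + x.2.2 ⬝ᵥ x.2.2) + c')
    (hgradK : ∀ x : (Fin n → ℝ) × (Fin n → ℝ) × (Fin m → ℝ),
      Real.sqrt (∑ i, (fderiv ℝ K x (eZ n m i)) ^ 2)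
        ≤ c'' * (1 + Real.sqrt (x.1 ⬝ᵥ x.1 + x.2.1 ⬝ᵥ x.2.1 + x.2.2 ⬝ᵥ x.2.2))) :
    ∃ θ₀ : ℝ, 0 < θ₀ ∧ ∀ θ : ℝ, 0 < θ → θ ≤ θ₀ → ∃ b : ℝ,
      ∀ x : (Fin n → ℝ) × (Fin n → ℝ) × (Fin m → ℝ),
        gleGen β F (fun _ => Γ) (fun _ => Sig) (fun y => Real.exp ((θ / 2) * K y)) x
          ≤ -Real.exp ((θ / 2) * K x) + b := by
  classical
  set M : ℝ := ∑ k, ∑ i, (Sig i k) ^ 2 with hMdef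
  have hM0 : 0 ≤ M := Finset.sum_nonneg fun k _ => Finset.sum_nonneg fun i _ => sq_nonneg _
  have hden : (0:ℝ) < M * c'' ^ 2 + 1 := by positivity
  refine ⟨min 1 (β * c / (M * c'' ^ 2 + 1)),
    lt_min one_pos (div_pos (mul_pos hβ hc) hden), ?_⟩
  intro θ hθ hθle
  -- abbreviations
  set r2 : (Fin n → ℝ) × (Fin n → ℝ) × (Fin m → ℝ) → ℝ :=
    fun x => x.1 ⬝ᵥ x.1 + x.2.1 ⬝ᵥ x.2.1 + x.2.2 ⬝ᵥ x.2.2 with hr2def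
  have hdotnn : ∀ {k : ℕ} (v : Fin k → ℝ), (0:ℝ) ≤ v ⬝ᵥ v := fun v =>
    Finset.sum_nonneg fun j _ => mul_self_nonneg _
  have hr2nn : ∀ x, 0 ≤ r2 x := fun x => by
    have h1 := hdotnn x.1; have h2 := hdotnn x.2.1; have h3 := hdotnn x.2.2
    simp only [hr2def]; linarith
  have hθc : θ ≤ β * c / (M * c'' ^ 2 + 1) := le_trans hθle (min_le_right _ _)
  have h1 : θ * (M * c'' ^ 2 + 1) ≤ β * c := (le_div_iff₀ hden).mp hθc
  set Cst : ℝ := θ / 2 * c' + θ * c / 4 with hCstdef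
  set a : ℝ := θ * c / 4 with hadef
  have ha : 0 < a := by positivity
  set R : ℝ := max 0 ((Cst + 1) / a) with hRdef
  have hR0 : (0:ℝ) ≤ R := le_max_left _ _
  -- the bracket bound
  have hBx : ∀ x, θ / 2 * gleGen β F (fun _ => Γ) (fun _ => Sig) K x
      + 1 / (2 * β) * ((θ / 2) ^ 2 * ∑ i, ∑ j, (Sig * Sigᵀ) i j
          * (fderiv ℝ K x (eZ n m i) * fderiv ℝ K x (eZ n m j)))
      ≤ -a * r2 x + Cst := by
    intro x
    set g : Fin (n + m) → ℝ := fun i => fderiv ℝ K x (eZ n m i) with hgdef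
    set G : ℝ := ∑ i, (g i) ^ 2 with hGdef
    have hG0 : 0 ≤ G := Finset.sum_nonneg fun i _ => sq_nonneg _
    have hgr : Real.sqrt G ≤ c'' * (1 + Real.sqrt (r2 x)) := hgradK x
    have hGle : G ≤ 2 * c'' ^ 2 * (1 + r2 x) := by
      have e1 : Real.sqrt G ^ 2 = G := Real.sq_sqrt hG0
      have e2 : Real.sqrt (r2 x) ^ 2 = r2 x := Real.sq_sqrt (hr2nn x)
      have e3 := Real.sqrt_nonneg G
      have e4 := Real.sqrt_nonneg (r2 x)
      nlinarith [mul_self_le_mul_self e3 hgr, sq_nonneg (1 - Real.sqrt (r2 x)),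
        sq_nonneg c'', mul_nonneg (mul_nonneg hc'' hc'') e4]
    have hS1 : (∑ i, ∑ j, (Sig * Sigᵀ) i j * (g i * g j)) ≤ M * G := by
      have := cs_quad Sig g
      simpa [hMdef, hGdef] using this
    have p1 : θ / 2 * gleGen β F (fun _ => Γ) (fun _ => Sig) K x
        ≤ θ / 2 * (-c * r2 x + c') :=
      mul_le_mul_of_nonneg_left (hLK x) (by positivity)
    have p2 : (∑ i, ∑ j, (Sig * Sigᵀ) i j * (g i * g j))
        ≤ M * (2 * c'' ^ 2 * (1 + r2 x)) :=
      hS1.trans (mul_le_mul_of_nonneg_left hGle hM0)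
    have h1r : (0:ℝ) ≤ 1 + r2 x := by linarith [hr2nn x]
    have key2 : θ * (M * c'' ^ 2) ≤ β * c := by nlinarith [h1, hθ.le]
    have key3 := mul_le_mul_of_nonneg_right key2
      (mul_nonneg (by positivity : (0:ℝ) ≤ θ / 2) h1r)
    have hfin : (θ / 2) ^ 2 * (M * (2 * c'' ^ 2 * (1 + r2 x)))
        ≤ θ * c / 4 * (1 + r2 x) * (2 * β) := by nlinarith [key3]
    have p3 : 1 / (2 * β) * ((θ / 2) ^ 2 * ∑ i, ∑ j, (Sig * Sigᵀ) i j * (g i * g j))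
        ≤ θ * c / 4 * (1 + r2 x) := by
      have h5 : (θ / 2) ^ 2 * (∑ i, ∑ j, (Sig * Sigᵀ) i j * (g i * g j))
          ≤ (θ / 2) ^ 2 * (M * (2 * c'' ^ 2 * (1 + r2 x))) :=
        mul_le_mul_of_nonneg_left p2 (sq_nonneg _)
      rw [one_div_mul_eq_div, div_le_iff₀ (by positivity : (0:ℝ) < 2 * β)]
      exact h5.trans hfin
    have : θ / 2 * (-c * r2 x + c') + θ * c / 4 * (1 + r2 x) = -a * r2 x + Cst := by
      simp only [hadef, hCstdef]; ring
    linarith [p1, p3]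
  -- continuity and compactness
  have hEXc : Continuous (fun y => Real.exp ((θ / 2) * K y)) :=
    Real.continuous_exp.comp (continuous_const.mul hK.continuous)
  have hr2cont : Continuous r2 := by
    simp only [hr2def]
    unfold dotProduct
    fun_prop
  have hclosed : IsClosed {x | r2 x ≤ R} := isClosed_le hr2cont continuous_const
  have hsub : {x | r2 x ≤ R} ⊆ Metric.closedBall 0 (Real.sqrt R) := by
    intro x hx
    have hxR : r2 x ≤ R := hx
    have key : ∀ {k : ℕ} (v : Fin k → ℝ), v ⬝ᵥ v ≤ r2 x → ‖v‖ ≤ Real.sqrt R := by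
      intro k v hv
      refine (pi_norm_le_iff_of_nonneg (Real.sqrt_nonneg R)).mpr fun i => ?_
      rw [Real.norm_eq_abs]
      refine Real.abs_le_sqrt ?_
      have hsingle : v i * v i ≤ v ⬝ᵥ v :=
        Finset.single_le_sum (f := fun j => v j * v j)
          (fun j _ => mul_self_nonneg _) (Finset.mem_univ i)
      have : v i ^ 2 ≤ v ⬝ᵥ v := by rw [sq]; exact hsingle
      linarith
    have hd1 := hdotnn x.1; have hd2 := hdotnn x.2.1; have hd3 := hdotnn x.2.2
    have hr2x : r2 x = x.1 ⬝ᵥ x.1 + x.2.1 ⬝ᵥ x.2.1 + x.2.2 ⬝ᵥ x.2.2 := rfl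
    rw [Metric.mem_closedBall, dist_zero_right, Prod.norm_def, Prod.norm_def]
    refine max_le (key x.1 (by rw [hr2x]; linarith)) (max_le
      (key x.2.1 (by rw [hr2x]; linarith)) (key x.2.2 (by rw [hr2x]; linarith)))
  have hScompact : IsCompact {x | r2 x ≤ R} :=
    (isCompact_closedBall 0 (Real.sqrt R)).of_isClosed_subset hclosed hsub
  have h0S : (0 : (Fin n → ℝ) × (Fin n → ℝ) × (Fin m → ℝ)) ∈ {x | r2 x ≤ R} := by
    have : r2 0 = 0 := by simp [hr2def, dotProduct]
    simp only [Set.mem_setOf_eq, this]; exact hR0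
  obtain ⟨x₀, hx₀, hmax⟩ := hScompact.exists_isMaxOn ⟨0, h0S⟩ hEXc.continuousOn
  refine ⟨max 0 (Real.exp ((θ / 2) * K x₀) * (Cst + 1)), ?_⟩
  intro x
  have hb0 : (0:ℝ) ≤ max 0 (Real.exp ((θ / 2) * K x₀) * (Cst + 1)) := le_max_left _ _
  rw [gleGen_exp β F Γ Sig K hK (θ / 2) x]
  set EX : ℝ := Real.exp ((θ / 2) * K x) with hEXdef
  have hEpos : 0 < EX := Real.exp_pos _
  set B : ℝ := θ / 2 * gleGen β F (fun _ => Γ) (fun _ => Sig) K x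
      + 1 / (2 * β) * ((θ / 2) ^ 2 * ∑ i, ∑ j, (Sig * Sigᵀ) i j
          * (fderiv ℝ K x (eZ n m i) * fderiv ℝ K x (eZ n m j))) with hBdef
  have hBle : B ≤ -a * r2 x + Cst := hBx x
  clear_value B EX Cst a R
  by_cases hcase : -a * r2 x + (Cst + 1) ≤ 0
  · have h7 : EX * (B + 1) ≤ EX * (-a * r2 x + (Cst + 1)) :=
      mul_le_mul_of_nonneg_left (by linarith) hEpos.le
    have h8 : EX * (-a * r2 x + (Cst + 1)) ≤ 0 :=
      mul_nonpos_of_nonneg_of_nonpos hEpos.le hcase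
    nlinarith [h7, h8, hb0]
  · push_neg at hcase
    have hCpos : 0 < Cst + 1 := by nlinarith [mul_nonneg ha.le (hr2nn x)]
    have hxS : x ∈ {y | r2 y ≤ R} := by
      have : r2 x < (Cst + 1) / a := by
        rw [lt_div_iff₀ ha]; nlinarith
      have hRge : (Cst + 1) / a ≤ R := by rw [hRdef]; exact le_max_right _ _
      exact le_trans this.le hRge
    have hEle : EX ≤ Real.exp ((θ / 2) * K x₀) := by rw [hEXdef]; simpa using hmax hxS
    have h7 : EX * (B + 1) ≤ EX * (Cst + 1) := by
      refine mul_le_mul_of_nonneg_left ?_ hEpos.le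
      nlinarith [mul_nonneg ha.le (hr2nn x)]
    have h8 : EX * (Cst + 1) ≤ Real.exp ((θ / 2) * K x₀) * (Cst + 1) :=
      mul_le_mul_of_nonneg_right hEle hCpos.le
    have h9 : Real.exp ((θ / 2) * K x₀) * (Cst + 1)
        ≤ max 0 (Real.exp ((θ / 2) * K x₀) * (Cst + 1)) := le_max_right _ _
    nlinarith [h7, h8, h9]
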